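/- For any simplicial complex $\mathcal{K}$ on $[m]$ (without ghost vertices) and any field $\mathbf{k}$, the formal power series $\mathrm{b}_{\mathbf{k}[\mathcal{K}]}(x_1,\dots,x_m,z) := \prod_{i=1}^m (1+x_i z) / \mathrm{P}_{\mathbf{k}[\mathcal{K}]}(x,z)$ satisfies $\mathrm{b}_{\mathbf{k}[\mathcal{K}]}(x,z) = \sum_{J \subseteq [m]} b_{\mathcal{K}_J,\mathbf{k}}(z) x^J$, where $b_{\mathcal{K}_J,\mathbf{k}}(z)$ is the coefficient of $x^J$ in $\mathrm{b}_{\mathbf{k}[\mathcal{K}_J]}$, i.e. the coefficient of the top square-free multidegree depends only on the full subcomplex $\mathcal{K}_J$. -/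

import Mathlib

/-- `K` is an abstract simplicial complex on the vertex type `V`. -/
def IsComplexOn {V : Type} (K : Set (Finset V)) : Prop :=
  ∅ ∈ K ∧ ∀ s ∈ K, ∀ t, t ⊆ s → t ∈ K

/-- Merge the entries in positions `i` and `i + 1` of a list (used to define the bar
differential via multiplication of adjacent monomials, recorded additively on
exponent vectors). -/
def mergeList {M : Type} [Add M] : ℕ → List M → List M
  | 0, a :: b :: l => (a + b) :: l
  | i + 1, a :: l => a :: mergeList i l
  | _, l => l

/-- The basis of the multidegree-`α` component of the `n`-th term of the reduced bar
construction of the Stanley--Reisner ring `k[K]`: lists of `n` nonzero monomials (exponent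
vectors) whose supports are faces of `K` and whose multidegrees sum to `α`.  (A monomial
of multidegree `β` has internal degree `2β` in `k[K]`; we record half the internal
multidegree throughout.) -/
def BarBasis {V : Type} (K : Set (Finset V)) (α : V →₀ ℕ) (n : ℕ) : Type :=
  { l : List (V →₀ ℕ) //
      l.length = n ∧ (∀ m ∈ l, m ≠ 0 ∧ m.support ∈ K) ∧ l.sum = α }

/-- The multidegree-`α` component of the `n`-th term of the reduced bar construction. -/
abbrev BarChains (k : Type) [Field k] {V : Type} (K : Set (Finset V)) (α : V →₀ ℕ)
    (n : ℕ) : Type :=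
  BarBasis K α n →₀ k

open Classical in
/-- Send a list to the corresponding basis element if it is admissible, and to `0`
otherwise (monomials whose support is not a face vanish in `k[K]`). -/
noncomputable def barProj (k : Type) [Field k] {V : Type} (K : Set (Finset V))
    (α : V →₀ ℕ) (n : ℕ) (l : List (V →₀ ℕ)) : BarChains k K α n :=
  if h : l.length = n ∧ (∀ m ∈ l, m ≠ 0 ∧ m.support ∈ K) ∧ l.sum = α then
    Finsupp.single ⟨l, h⟩ 1
  else 0

/-- The bar differential `d : B_{n+1} → B_n` in multidegree `α`. -/
noncomputable def barD (k : Type) [Field k] {V : Type} (K : Set (Finset V))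
    (α : V →₀ ℕ) (n : ℕ) :
    BarChains k K α (n + 1) →ₗ[k] BarChains k K α n :=
  Finsupp.lift (BarChains k K α n) k (BarBasis K α (n + 1)) fun l =>
    ∑ i ∈ Finset.range n, ((-1 : k) ^ (i + 1)) • barProj k K α n (mergeList i l.1)

/-- The cycles of the bar complex. -/
noncomputable def barCycles (k : Type) [Field k] {V : Type} (K : Set (Finset V))
    (α : V →₀ ℕ) : (n : ℕ) → Submodule k (BarChains k K α n)
  | 0 => ⊤
  | n + 1 => LinearMap.ker (barD k K α n)


/-- Quotient instance for homology of the bar complex. -/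
noncomputable instance barQuot (k : Type) [Field k] {V : Type} (K : Set (Finset V))
    (α : V →₀ ℕ) (n : ℕ) :
    HasQuotient (↥(barCycles k K α n)) (Submodule k ↥(barCycles k K α n)) :=
  Submodule.hasQuotient (R := k) (M := ↥(barCycles k K α n))

/-- The multigraded Tor group `Tor^{k[K]}_{n,2α}(k,k)`, computed as the homology of the
multidegree-`α` component of the reduced bar construction of `k[K]`. -/
abbrev TorSR (k : Type) [Field k] {V : Type} (K : Set (Finset V)) (α : V →₀ ℕ)
    (n : ℕ) : Type :=
  ↥(barCycles k K α n) ⧸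
    Submodule.comap (barCycles k K α n).subtype (LinearMap.range (barD k K α n))


/-- The multigraded Poincaré series `P_{k[K]}(x₁,…,x_m,z)` of `Tor^{k[K]}(k,k)`, an element
of `ℤ[[x₁,…,x_m]][[z]]`: the coefficient of `x^α` is the power series in `z` recording the
dimensions of `Tor^{k[K]}_{n,2α}(k,k)`. -/
noncomputable def torPoincare (m : ℕ) (K : Set (Finset (Fin m))) (k : Type) [Field k] :
    MvPowerSeries (Fin m) (PowerSeries ℤ) :=
  fun α => PowerSeries.mk fun n => (Module.finrank k (TorSR k K α n) : ℤ)

/-- The Backelin--Berglund series `b_{k[K]}(x,z) := ∏ᵢ(1 + xᵢz) / P_{k[K]}(x,z)`. -/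
noncomputable def bSeries (m : ℕ) (K : Set (Finset (Fin m))) (k : Type) [Field k] :
    MvPowerSeries (Fin m) (PowerSeries ℤ) :=
  (∏ i : Fin m, (1 + MvPowerSeries.X i * MvPowerSeries.C (σ := Fin m) (R := PowerSeries ℤ) PowerSeries.X))
    * MvPowerSeries.invOfUnit (torPoincare m K k) 1

section Transport

variable {V : Type} {K K' : Set (Finset V)} {α : V →₀ ℕ}

lemma mem_le_listSum {l : List (V →₀ ℕ)} {f : V →₀ ℕ} (hf : f ∈ l) (i : V) :
    f i ≤ l.sum i := by
  induction l with
  | nil => simp at hf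
  | cons a t ih =>
    simp only [List.sum_cons, Finsupp.add_apply]
    rcases List.mem_cons.mp hf with rfl | h
    · exact Nat.le_add_right _ _
    · exact le_trans (ih h) (Nat.le_add_left _ _)

lemma barPred_mp (hKK' : ∀ s : Finset V, s ⊆ α.support → (s ∈ K → s ∈ K')) (n : ℕ)
    (l : List (V →₀ ℕ))
    (h : l.length = n ∧ (∀ m ∈ l, m ≠ 0 ∧ m.support ∈ K) ∧ l.sum = α) :
    l.length = n ∧ (∀ m ∈ l, m ≠ 0 ∧ m.support ∈ K') ∧ l.sum = α := by
  obtain ⟨h1, h2, h3⟩ := h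
  refine ⟨h1, fun f hf => ⟨(h2 f hf).1, ?_⟩, h3⟩
  refine hKK' _ (fun i hi => ?_) (h2 f hf).2
  rw [Finsupp.mem_support_iff] at hi ⊢
  have := mem_le_listSum hf i
  rw [h3] at this
  omega

lemma barPred_iff (hKK' : ∀ s : Finset V, s ⊆ α.support → (s ∈ K ↔ s ∈ K')) (n : ℕ) (l : List (V →₀ ℕ)) :
    (l.length = n ∧ (∀ m ∈ l, m ≠ 0 ∧ m.support ∈ K) ∧ l.sum = α) ↔
    (l.length = n ∧ (∀ m ∈ l, m ≠ 0 ∧ m.support ∈ K') ∧ l.sum = α) :=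
  ⟨barPred_mp (fun s hs => (hKK' s hs).mp) n l,
   barPred_mp (fun s hs => (hKK' s hs).mpr) n l⟩

noncomputable def barBasisEquiv (hKK' : ∀ s : Finset V, s ⊆ α.support → (s ∈ K ↔ s ∈ K')) (n : ℕ) : BarBasis K α n ≃ BarBasis K' α n :=
  Equiv.subtypeEquivRight (barPred_iff hKK' n)

variable (k : Type) [Field k]

noncomputable def chainEquiv (hKK' : ∀ s : Finset V, s ⊆ α.support → (s ∈ K ↔ s ∈ K')) (n : ℕ) : BarChains k K α n ≃ₗ[k] BarChains k K' α n :=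
  Finsupp.domLCongr (barBasisEquiv hKK' n)

lemma chainEquiv_barProj (hKK' : ∀ s : Finset V, s ⊆ α.support → (s ∈ K ↔ s ∈ K')) (n : ℕ) (l : List (V →₀ ℕ)) :
    chainEquiv k hKK' n (barProj k K α n l) = barProj k K' α n l := by
  unfold barProj
  by_cases h : l.length = n ∧ (∀ m ∈ l, m ≠ 0 ∧ m.support ∈ K) ∧ l.sum = α
  · rw [dif_pos h, dif_pos ((barPred_iff hKK' n l).mp h)]
    simp only [chainEquiv, Finsupp.domLCongr_single]
    exact Finsupp.domLCongr_single _ _ _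
  · rw [dif_neg h, dif_neg (fun h' => h ((barPred_iff hKK' n l).mpr h')), map_zero]

lemma chainEquiv_barD (hKK' : ∀ s : Finset V, s ⊆ α.support → (s ∈ K ↔ s ∈ K')) (n : ℕ) :
    (chainEquiv k hKK' n).toLinearMap ∘ₗ barD k K α n
      = barD k K' α n ∘ₗ (chainEquiv k hKK' (n + 1)).toLinearMap := by
  apply Finsupp.lhom_ext
  intro a b
  have hval : ((barBasisEquiv hKK' (n + 1)) a).1 = a.1 := rfl
  simp only [LinearMap.coe_comp, Function.comp_apply, LinearEquiv.coe_coe]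
  rw [show (chainEquiv k hKK' (n+1)) (Finsupp.single a b)
      = Finsupp.single (barBasisEquiv hKK' (n+1) a) b from
      Finsupp.domLCongr_single _ _ _]
  unfold barD
  rw [Finsupp.lift_apply, Finsupp.lift_apply, Finsupp.sum_single_index (by simp),
    Finsupp.sum_single_index (by simp)]
  rw [map_smul, map_sum]
  congr 1
  refine Finset.sum_congr rfl fun i _ => ?_
  rw [map_smul, chainEquiv_barProj, hval]

lemma chainEquiv_barD_apply (hKK' : ∀ s : Finset V, s ⊆ α.support → (s ∈ K ↔ s ∈ K')) (n : ℕ) (x : BarChains k K α (n + 1)) :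
    chainEquiv k hKK' n (barD k K α n x) = barD k K' α n (chainEquiv k hKK' (n + 1) x) :=
  LinearMap.congr_fun (chainEquiv_barD k hKK' n) x

lemma cycles_map (hKK' : ∀ s : Finset V, s ⊆ α.support → (s ∈ K ↔ s ∈ K')) (n : ℕ) :
    (barCycles k K α n).map (chainEquiv k hKK' n : BarChains k K α n →ₗ[k] _)
      = barCycles k K' α n := by
  cases n with
  | zero =>
    rw [show barCycles k K α 0 = ⊤ from rfl, show barCycles k K' α 0 = ⊤ from rfl,
      Submodule.map_top, LinearEquiv.range]
  | succ n =>
    ext x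
    rw [show barCycles k K α (n+1) = LinearMap.ker (barD k K α n) from rfl,
      show barCycles k K' α (n+1) = LinearMap.ker (barD k K' α n) from rfl]
    simp only [Submodule.mem_map, LinearMap.mem_ker, LinearEquiv.coe_coe]
    constructor
    · rintro ⟨y, hy, rfl⟩
      rw [← chainEquiv_barD_apply, hy, map_zero]
    · intro hx
      refine ⟨(chainEquiv k hKK' (n+1)).symm x, ?_, by simp⟩
      have := chainEquiv_barD_apply k hKK' n ((chainEquiv k hKK' (n+1)).symm x)
      rw [LinearEquiv.apply_symm_apply, hx] at this
      exact (chainEquiv k hKK' n).map_eq_zero_iff.mp this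

lemma range_map (hKK' : ∀ s : Finset V, s ⊆ α.support → (s ∈ K ↔ s ∈ K')) (n : ℕ) :
    (LinearMap.range (barD k K α n)).map (chainEquiv k hKK' n : BarChains k K α n →ₗ[k] _)
      = LinearMap.range (barD k K' α n) := by
  ext x
  simp only [Submodule.mem_map, LinearMap.mem_range, LinearEquiv.coe_coe]
  constructor
  · rintro ⟨y, ⟨z, rfl⟩, rfl⟩
    exact ⟨chainEquiv k hKK' (n+1) z, (chainEquiv_barD_apply k hKK' n z).symm⟩
  · rintro ⟨z, rfl⟩
    exact ⟨barD k K α n ((chainEquiv k hKK' (n+1)).symm z),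
      ⟨_, rfl⟩, by rw [chainEquiv_barD_apply, LinearEquiv.apply_symm_apply]⟩

noncomputable def cycEquiv (hKK' : ∀ s : Finset V, s ⊆ α.support → (s ∈ K ↔ s ∈ K')) (n : ℕ) : ↥(barCycles k K α n) ≃ₗ[k] ↥(barCycles k K' α n) :=
  ((chainEquiv k hKK' n).submoduleMap (barCycles k K α n)).trans
    (LinearEquiv.ofEq _ _ (cycles_map k hKK' n))

lemma cycEquiv_coe (hKK' : ∀ s : Finset V, s ⊆ α.support → (s ∈ K ↔ s ∈ K')) (n : ℕ) (x : ↥(barCycles k K α n)) :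
    (cycEquiv k hKK' n x : BarChains k K' α n) = chainEquiv k hKK' n (x : BarChains k K α n) :=
  rfl

noncomputable def torEquiv (hKK' : ∀ s : Finset V, s ⊆ α.support → (s ∈ K ↔ s ∈ K')) (n : ℕ) : TorSR k K α n ≃ₗ[k] TorSR k K' α n := by
  refine Submodule.Quotient.equiv _ _ (cycEquiv k hKK' n) ?_
  ext q
  simp only [Submodule.mem_map, Submodule.mem_comap, Submodule.coe_subtype]
  constructor
  · rintro ⟨x, hx, rfl⟩
    rw [LinearEquiv.coe_coe, cycEquiv_coe, ← range_map k hKK' n]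
    exact ⟨_, hx, rfl⟩
  · intro hq
    rw [← range_map k hKK' n] at hq
    obtain ⟨z, hz, hzq⟩ := hq
    have hzc : z ∈ barCycles k K α n := by
      have : (q : BarChains k K' α n) ∈ (barCycles k K α n).map
          (chainEquiv k hKK' n : BarChains k K α n →ₗ[k] _) := by
        rw [cycles_map]; exact q.2
      obtain ⟨w, hw, hwq⟩ := this
      have : w = z := (chainEquiv k hKK' n).injective (by
        simp only [LinearEquiv.coe_coe] at hwq hzq; rw [hwq, hzq])
      rwa [← this]
    refine ⟨⟨z, hzc⟩, hz, ?_⟩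
    apply Subtype.ext
    rw [LinearEquiv.coe_coe, cycEquiv_coe]
    exact hzq

end Transport

lemma torPoincare_coeff_congr (m : ℕ) (K K' : Set (Finset (Fin m))) (k : Type) [Field k]
    (β : Fin m →₀ ℕ) (h : ∀ s : Finset (Fin m), s ⊆ β.support → (s ∈ K ↔ s ∈ K')) :
    MvPowerSeries.coeff (R := PowerSeries ℤ) β (torPoincare m K k)
      = MvPowerSeries.coeff (R := PowerSeries ℤ) β (torPoincare m K' k) := by
  rw [MvPowerSeries.coeff_apply, MvPowerSeries.coeff_apply]
  unfold torPoincare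
  apply PowerSeries.ext
  intro n
  rw [PowerSeries.coeff_mk, PowerSeries.coeff_mk]
  exact_mod_cast (torEquiv k h n).finrank_eq

lemma invOfUnit_coeff_congr {m : ℕ} (φ ψ : MvPowerSeries (Fin m) (PowerSeries ℤ))
    (u : (PowerSeries ℤ)ˣ) (q : Fin m →₀ ℕ)
    (h : ∀ β ≤ q, MvPowerSeries.coeff (R := PowerSeries ℤ) β φ
      = MvPowerSeries.coeff (R := PowerSeries ℤ) β ψ) :
    MvPowerSeries.coeff (R := PowerSeries ℤ) q (φ.invOfUnit u)
      = MvPowerSeries.coeff (R := PowerSeries ℤ) q (ψ.invOfUnit u) := by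
  induction q using WellFoundedLT.induction with
  | _ q ih =>
  rw [MvPowerSeries.coeff_invOfUnit, MvPowerSeries.coeff_invOfUnit]
  by_cases h0 : q = 0
  · rw [if_pos h0, if_pos h0]
  · rw [if_neg h0, if_neg h0]
    congr 1
    refine Finset.sum_congr rfl fun x hx => ?_
    have hadd : x.1 + x.2 = q := Finset.HasAntidiagonal.mem_antidiagonal.mp hx
    by_cases hlt : x.2 < q
    · rw [if_pos hlt, if_pos hlt]
      have h1 : x.1 ≤ q := hadd ▸ le_self_add
      have h2 : x.2 ≤ q := hadd ▸ le_add_self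
      rw [h _ h1, ih x.2 hlt (fun β hβ => h β (hβ.trans h2))]
    · rw [if_neg hlt, if_neg hlt]

/-- For any simplicial complex `K` on `[m]` without ghost vertices and any field `k`, the
coefficient of the top square-free multidegree `x^J` in
`b_{k[K]}(x,z) = ∏ᵢ(1 + xᵢz)/P_{k[K]}(x,z)` depends only on the full subcomplex `K_J`,
i.e. `b_{k[K]}(x,z) = ∑_{J ⊆ [m]} b_{K_J,k}(z)·x^J` where `b_{K_J,k}(z)` is the
coefficient of `x^J` in `b_{k[K_J]}`. -/
theorem stmt3 (m : ℕ) (K : Set (Finset (Fin m))) (hK : IsComplexOn K)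
    (hng : ∀ i : Fin m, {i} ∈ K) (k : Type) [Field k] (J : Finset (Fin m)) :
    MvPowerSeries.coeff (R := PowerSeries ℤ) (∑ j ∈ J, Finsupp.single j 1) (bSeries m K k) =
      MvPowerSeries.coeff (R := PowerSeries ℤ) (∑ j ∈ J, Finsupp.single j 1)
        (bSeries m {s ∈ K | s ⊆ J} k) := by
  classical
  set γ : Fin m →₀ ℕ := ∑ j ∈ J, Finsupp.single j 1 with hγ
  have hγs : ∀ i, i ∈ γ.support → i ∈ J := by
    intro i hi
    rw [Finsupp.mem_support_iff] at hi
    by_contra hij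
    apply hi
    rw [hγ, Finsupp.finset_sum_apply]
    exact Finset.sum_eq_zero fun j hj => by
      rw [Finsupp.single_apply, if_neg (by rintro rfl; exact hij hj)]
  unfold bSeries
  rw [MvPowerSeries.coeff_mul, MvPowerSeries.coeff_mul]
  refine Finset.sum_congr rfl fun x hx => ?_
  congr 1
  have hx2 : x.2 ≤ γ := by
    have h := Finset.HasAntidiagonal.mem_antidiagonal.mp hx
    exact h ▸ le_add_self
  refine invOfUnit_coeff_congr _ _ _ _ fun β hβ => ?_
  refine torPoincare_coeff_congr m _ _ k β fun s hs => ?_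
  have hsJ : s ⊆ J := by
    intro i hi
    apply hγs
    have hib : i ∈ β.support := hs hi
    rw [Finsupp.mem_support_iff] at hib ⊢
    have hle : β i ≤ γ i := (hβ.trans hx2) i
    omega
  constructor
  · intro h; exact ⟨h, hsJ⟩
  · rintro ⟨h, -⟩; exact h
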